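/- arXiv:1410.3671 — 2 statements merged into one kernel-verified Lean document; each statement's English description precedes it below -/
import Mathlib

section
/- Every nonzero projective module over a finite-dimensional algebra has a maximal (proper) submodule. -/
open Submodule

lemma nak_aux {A : Type*} [Ring A] {a y : A}
    (hy : y ∈ (Ideal.jacobson (⊥ : Ideal A)) • (Submodule.span A {a})) :
    ∃ b ∈ Ideal.jacobson (⊥ : Ideal A), y = b * a := by
  refine Submodule.smul_induction_on hy ?_ ?_
  · rintro r hr n hn
    obtain ⟨c, rfl⟩ := Submodule.mem_span_singleton.mp hn
    exact ⟨r * c, Ideal.mul_mem_right c _ hr,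
      by rw [smul_eq_mul, smul_eq_mul, mul_assoc]⟩
  · rintro x y ⟨b1, hb1, rfl⟩ ⟨b2, hb2, rfl⟩
    exact ⟨b1 + b2, add_mem hb1 hb2, (add_mul b1 b2 a).symm⟩

lemma nak {A : Type*} [Ring A] (s : Finset A)
    (h : (Submodule.span A (s : Set A)) ≤
      (Ideal.jacobson (⊥ : Ideal A)) • (Submodule.span A (s : Set A))) :
    Submodule.span A (s : Set A) = ⊥ := by
  classical
  induction s using Finset.induction_on with
  | empty => simp
  | @insert a s ha ih =>
    set J : Ideal A := Ideal.jacobson ⊥ with hJ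
    have hmem : a ∈ Submodule.span A ((insert a s : Finset A) : Set A) :=
      Submodule.subset_span (by simp)
    have hsplit : Submodule.span A ((insert a s : Finset A) : Set A)
        = Submodule.span A {a} ⊔ Submodule.span A (s : Set A) := by
      rw [Finset.coe_insert, Submodule.span_insert]
    have hmem2 : a ∈ J • Submodule.span A {a} ⊔ J • Submodule.span A (s : Set A) := by
      have h2 := h hmem
      rwa [hsplit, Submodule.smul_sup] at h2
    obtain ⟨y, hy, z, hz, hyz⟩ := Submodule.mem_sup.mp hmem2
    obtain ⟨b, hb, rfl⟩ := nak_aux hy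
    have h1 : (1 - b) * a = z := by
      rw [eq_sub_of_add_eq' hyz, sub_mul, one_mul]
    obtain ⟨u, hu⟩ := Ideal.exists_mul_sub_mem_of_sub_one_mem_jacobson (1 - b)
      (by simpa using J.neg_mem hb)
    have hu1 : u * (1 - b) = 1 := by
      have h2 := Submodule.mem_bot A |>.mp hu
      exact sub_eq_zero.mp h2
    have haz : a = u • z := by
      rw [← h1, smul_eq_mul, ← mul_assoc, hu1, one_mul]
    have hamem : a ∈ Submodule.span A (s : Set A) := by
      rw [haz]
      exact Submodule.smul_le_right (Submodule.smul_mem _ u hz)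
    have heq : Submodule.span A ((insert a s : Finset A) : Set A)
        = Submodule.span A (s : Set A) := by
      rw [Finset.coe_insert, Submodule.span_insert_eq_span hamem]
    rw [heq]
    refine ih (le_trans (le_trans ?_ h) ?_)
    · exact Submodule.span_mono (by simp [Finset.coe_insert, Set.subset_insert])
    · rw [heq]

/-- Every nonzero projective module over a finite-dimensional algebra has a
maximal submodule. -/
theorem stmt9 {K A P : Type*} [Field K] [Ring A] [Algebra K A] [FiniteDimensional K A]
    [AddCommGroup P] [Module A P] [Module.Projective A P] [Nontrivial P] :
    ∃ m : Submodule A P, IsCoatom m := by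
  classical
  set J : Ideal A := Ideal.jacobson ⊥ with hJ
  -- A is left Artinian and left Noetherian
  have hart : IsArtinian A A := isArtinian_of_tower K inferInstance
  have hnoe : IsNoetherian A A := isNoetherian_of_tower K inferInstance
  -- descending chain of powers of J
  let C : ℕ → Ideal A := fun n => Nat.rec ⊤ (fun _ I => J • I) n
  have hC0 : C 0 = ⊤ := rfl
  have hCs : ∀ n, C (n + 1) = J • C n := fun n => rfl
  have hanti : Antitone C := antitone_nat_of_succ_le fun n => by
    rw [hCs]; exact Submodule.smul_le_right
  obtain ⟨n, hn⟩ := IsArtinian.monotone_stabilizes (R := A) (M := A)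
    ⟨fun n => OrderDual.toDual (C n), fun i j hij => hanti hij⟩
  have hstab : J • C n = C n := (hn (n + 1) (Nat.le_succ n)).symm
  obtain ⟨s, hs⟩ := (IsNoetherian.noetherian (C n) : (C n).FG)
  have hCn : C n = ⊥ := by
    rw [← hs]
    exact nak s (by rw [hs, hstab])
  -- hence J • ⊤ ≠ ⊤ on P
  have hJP : J • (⊤ : Submodule A P) ≠ ⊤ := by
    intro htop
    have hall : ∀ k, C k • (⊤ : Submodule A P) = ⊤ := by
      intro k
      induction k with
      | zero => rw [hC0, Submodule.top_smul]
      | succ k ihk => rw [hCs, Submodule.smul_assoc, ihk, htop]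
    have := hall n
    rw [hCn, Submodule.bot_smul] at this
    exact bot_ne_top this
  obtain ⟨p, _, hp⟩ := SetLike.exists_of_lt
    (lt_of_le_of_ne Submodule.smul_le_right hJP : J • (⊤ : Submodule A P) < ⊤)
  -- projective section
  obtain ⟨sec, hsec⟩ := (inferInstance : Module.Projective A P).out
  have hexists : ∃ i : P, sec p i ∉ J := by
    by_contra hcon
    push_neg at hcon
    apply hp
    have : p = (sec p).sum fun i c => c • i := by
      conv_lhs => rw [← hsec p]
      rfl
    rw [this]
    refine Submodule.sum_mem _ fun i hi => ?_
    exact Submodule.smul_mem_smul (hcon i) Submodule.mem_top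
  obtain ⟨i, hi⟩ := hexists
  rw [hJ, Ideal.jacobson, Submodule.mem_sInf] at hi
  push_neg at hi
  obtain ⟨m, ⟨-, hmax⟩, hnm⟩ := hi
  have hsimple : IsSimpleModule A (A ⧸ m) :=
    isSimpleModule_iff_isCoatom.mpr (Ideal.isMaximal_def.mp hmax)
  let f : P →ₗ[A] A ⧸ m := (Submodule.mkQ m) ∘ₗ (Finsupp.lapply i) ∘ₗ sec
  have hfp : f p ≠ 0 := by
    simp only [f, LinearMap.comp_apply, Finsupp.lapply_apply, Submodule.mkQ_apply]
    rw [Ne, Submodule.Quotient.mk_eq_zero]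
    exact hnm
  have hsurj : Function.Surjective f := by
    rw [← LinearMap.range_eq_top]
    rcases eq_bot_or_eq_top (LinearMap.range f) with h | h
    · exfalso
      apply hfp
      have hmem3 : f p ∈ LinearMap.range f := LinearMap.mem_range_self f p
      rw [h, Submodule.mem_bot] at hmem3
      exact hmem3
    · exact h
  exact ⟨LinearMap.ker f, LinearMap.isCoatom_ker_of_surjective hsurj⟩
end

section
/- Every projective indecomposable module over a finite-dimensional algebra is cyclic (hence finitely generated). -/
open Submodule

section Jac
variable {A : Type*} [Ring A]

local notation "JacA" => Ideal.jacobson (⊥ : Ideal A)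

lemma jac_mul_mem_right {x : A} (hx : x ∈ (JacA : Ideal A)) (y : A) : x * y ∈ (JacA : Ideal A) :=
  (Ideal.jacobson (⊥ : Ideal A)).mul_mem_right y hx

lemma exists_left_inv_of_mem_jac {r : A} (hr : r ∈ (JacA : Ideal A)) :
    ∃ z : A, z * (1 - r) = 1 := by
  obtain ⟨z, hz⟩ := Ideal.mem_jacobson_iff.mp hr (-1)
  rw [Ideal.mem_bot] at hz
  refine ⟨z, ?_⟩
  have h : z * (-1) * r + z - 1 = z * (1 - r) - 1 := by noncomm_ring
  rw [h] at hz
  exact sub_eq_zero.mp hz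

lemma isUnit_one_sub_of_mem_jac {r : A} (hr : r ∈ (JacA : Ideal A)) :
    IsUnit (1 - r) := by
  obtain ⟨z, hz⟩ := exists_left_inv_of_mem_jac hr
  -- z = 1 + z * r, and z * r ∈ Jac
  have hzr : z * r ∈ (JacA : Ideal A) := by
    have := Submodule.smul_mem (JacA : Ideal A) z hr
    rwa [smul_eq_mul] at this
  have hz' : z = 1 - (-(z * r)) := by
    have : z * (1 - r) = z - z * r := by noncomm_ring
    rw [this] at hz
    rw [sub_neg_eq_add, ← hz]
    noncomm_ring
  obtain ⟨w, hw⟩ := exists_left_inv_of_mem_jac (neg_mem hzr)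
  rw [← hz'] at hw
  have hwv : w = 1 - r := by
    calc w = w * (z * (1 - r)) := by rw [hz, mul_one]
    _ = (w * z) * (1 - r) := by rw [mul_assoc]
    _ = 1 - r := by rw [hw, one_mul]
  exact ⟨⟨1 - r, z, by rw [← hwv, hw], hz⟩, rfl⟩

/-- Associativity of ideal-smul on modules. -/
lemma ideal_smul_smul_assoc {M : Type*} [AddCommGroup M] [Module A M]
    (I J : Ideal A) (N : Submodule A M) :
    (I • (J : Submodule A A)) • N = I • (J • N) := by
  apply le_antisymm
  · rw [Submodule.smul_le]
    intro r hr n hn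
    refine Submodule.smul_induction_on (p := fun a => a • n ∈ I • (J • N)) hr ?_ ?_
    · intro a ha b hb
      rw [smul_eq_mul, mul_smul]
      exact Submodule.smul_mem_smul ha (Submodule.smul_mem_smul hb hn)
    · intro x y hx hy
      rw [add_smul]; exact add_mem hx hy
  · rw [Submodule.smul_le]
    intro r hr n hn
    refine Submodule.smul_induction_on (p := fun b => r • b ∈ (I • (J : Submodule A A)) • N) hn ?_ ?_
    · intro a ha b hb
      rw [← mul_smul, ← smul_eq_mul]
      exact Submodule.smul_mem_smul (Submodule.smul_mem_smul hr ha) hb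
    · intro x y hx hy
      rw [smul_add]; exact add_mem hx hy

end Jac
section Jiter
variable (A : Type*) [Ring A]

/-- Iterated powers of the Jacobson radical. -/
def jiter : ℕ → Ideal A
  | 0 => ⊤
  | n + 1 => Ideal.jacobson (⊥ : Ideal A) • jiter n

variable {A}

lemma jiter_succ (n : ℕ) : jiter A (n + 1) = Ideal.jacobson (⊥ : Ideal A) • jiter A n := rfl

lemma jiter_smul {M : Type*} [AddCommGroup M] [Module A M] (n : ℕ) (N : Submodule A M) :
    jiter A (n + 1) • N = Ideal.jacobson (⊥ : Ideal A) • (jiter A n • N) := by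
  rw [jiter_succ, ideal_smul_smul_assoc]

lemma jiter_one : jiter A 1 = Ideal.jacobson (⊥ : Ideal A) := by
  apply le_antisymm
  · rw [jiter_succ, Submodule.smul_le]
    intro r hr n _
    rw [smul_eq_mul]
    exact jac_mul_mem_right hr n
  · intro x hx
    have h : x • (1:A) ∈ jiter A 1 := Submodule.smul_mem_smul hx (Submodule.mem_top (R := A) (x := (1:A)))
    rwa [show x • (1:A) = x from mul_one x] at h

lemma jiter_add (a b : ℕ) : jiter A (a + b) = jiter A a • (jiter A b : Submodule A A) := by
  induction a with
  | zero => simp [jiter, Submodule.top_smul]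
  | succ a ih =>
    have : a + 1 + b = (a + b) + 1 := by omega
    rw [this, jiter_succ, ih, jiter_succ, ideal_smul_smul_assoc]

lemma jiter_antitone {a b : ℕ} (h : a ≤ b) : jiter A b ≤ jiter A a := by
  induction b with
  | zero => simpa [Nat.le_zero.mp h] using le_rfl
  | succ b ih =>
    rcases Nat.lt_or_ge a (b+1) with hlt | hge
    · exact le_trans (by rw [jiter_succ]; exact Submodule.smul_le_right) (ih (by omega))
    · have : a = b + 1 := by omega
      rw [this]

lemma jiter_le_jac (n : ℕ) : jiter A (n + 1) ≤ Ideal.jacobson (⊥ : Ideal A) := by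
  rw [← jiter_one]; exact jiter_antitone (by omega)

theorem exists_jiter_eq_bot [IsArtinianRing A] : ∃ n, jiter A n = ⊥ := by
  obtain ⟨n, hn⟩ := IsArtinian.monotone_stabilizes
    (⟨fun k => jiter A k, fun k l h => jiter_antitone h⟩ : ℕ →o (Ideal A)ᵒᵈ)
  refine ⟨n + 1, ?_⟩
  by_contra hbot
  have hstab : ∀ m, n ≤ m → jiter A m = jiter A n := fun m hm => (hn m hm).symm
  set N := jiter A (n + 1) with hN
  have hNN : N • (N : Submodule A A) = N := by
    rw [hN, ← jiter_add]
    rw [hstab (n + 1 + (n + 1)) (by omega), hstab (n+1) (by omega)]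
  have hNJ : N ≤ Ideal.jacobson (⊥ : Ideal A) := jiter_le_jac n
  -- N is closed under right multiplication
  have hNr : ∀ x ∈ N, ∀ a : A, x * a ∈ N := by
    have key : ∀ k, ∀ x ∈ jiter A k, ∀ a : A, x * a ∈ jiter A k := by
      intro k
      induction k with
      | zero => intro x _ a; exact Submodule.mem_top
      | succ k ih =>
        intro x hx a
        rw [jiter_succ] at hx ⊢
        refine Submodule.smul_induction_on (p := fun y => y * a ∈ Ideal.jacobson (⊥:Ideal A) • jiter A k) hx ?_ ?_
        · intro r hr m hm
          rw [show r • m * a = r • (m * a) from by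
            rw [smul_eq_mul, smul_eq_mul, mul_assoc]]
          exact Submodule.smul_mem_smul hr (ih m hm a)
        · intro y z hy hz
          rw [add_mul]; exact add_mem hy hz
    exact key (n+1)
  -- minimal ideal with N • I ≠ ⊥
  have hTS : (⊤ : Ideal A) ∈ {I : Ideal A | N • I ≠ ⊥} := by
    intro h
    apply hbot
    rw [eq_bot_iff]
    intro x hx
    have : x ∈ N • (⊤ : Ideal A) := by
      simpa using Submodule.smul_mem_smul hx (Submodule.mem_top (R := A) (x := (1:A)))
    rw [h] at this
    exact this
  obtain ⟨I₀, hI₀, hmin⟩ := IsArtinian.set_has_minimal {I : Ideal A | N • I ≠ ⊥} ⟨⊤, hTS⟩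
  -- find x in I₀ with N • span {x} ≠ ⊥
  have hx : ∃ x ∈ I₀, N • (Submodule.span A {x}) ≠ ⊥ := by
    by_contra h
    push_neg at h
    apply hI₀
    rw [eq_bot_iff, Submodule.smul_le]
    intro r hr m hm
    have := h m hm
    have hm' : r • m ∈ N • Submodule.span A {m} :=
      Submodule.smul_mem_smul hr (Submodule.subset_span rfl)
    rw [this] at hm'
    exact hm'
  obtain ⟨x, hxI, hxne⟩ := hx
  have hspan_le : Submodule.span A {x} ≤ I₀ := by
    rw [Submodule.span_le, Set.singleton_subset_iff]; exact hxI
  have hspan_eq : Submodule.span A {x} = I₀ := by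
    by_contra h
    exact hmin _ hxne (lt_of_le_of_ne hspan_le h)
  -- N • span {x} = I₀ by minimality
  have hNs_mem : N • Submodule.span A {x} ∈ {I : Ideal A | N • I ≠ ⊥} := by
    have : N • (N • Submodule.span A {x}) = N • Submodule.span A {x} := by
      rw [← ideal_smul_smul_assoc, hNN]
    rw [Set.mem_setOf_eq, this]
    exact hxne
  have hNs_le : N • Submodule.span A {x} ≤ I₀ := by
    rw [← hspan_eq]
    exact Submodule.smul_le_right
  have hNs_eq : N • Submodule.span A {x} = I₀ := by
    by_contra h
    exact hmin _ hNs_mem (lt_of_le_of_ne hNs_le h)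
  -- x ∈ N • span {x}, so x = r * x with r ∈ N
  have hxmem : x ∈ N • Submodule.span A {x} := hNs_eq ▸ hxI
  have hxrx : ∃ r ∈ N, r * x = x := by
    have hle : N • Submodule.span A {x} ≤ Submodule.map (LinearMap.toSpanSingleton A A x) (N : Submodule A A) := by
      rw [Submodule.smul_le]
      intro r hr m hm
      obtain ⟨a, rfl⟩ := Submodule.mem_span_singleton.mp hm
      have hmm : r • (a • x) = LinearMap.toSpanSingleton A A x (r * a) := by
        rw [LinearMap.toSpanSingleton_apply, smul_eq_mul, smul_eq_mul, smul_eq_mul, mul_assoc]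
      rw [hmm]
      exact Submodule.mem_map_of_mem (hNr r hr a)
    obtain ⟨r, hrN, hr⟩ := Submodule.mem_map.mp (hle hxmem)
    exact ⟨r, hrN, by simpa [LinearMap.toSpanSingleton_apply, smul_eq_mul] using hr⟩
  obtain ⟨r, hrN, hrx⟩ := hxrx
  have hx0 : x = 0 := by
    have h1 : (1 - r) * x = 0 := by rw [sub_mul, one_mul, hrx, sub_self]
    obtain ⟨u, hu⟩ := isUnit_one_sub_of_mem_jac (hNJ hrN)
    calc x = (↑u⁻¹ * (1 - r)) * x := by rw [← hu]; simp
    _ = ↑u⁻¹ * ((1 - r) * x) := by rw [mul_assoc]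
    _ = 0 := by rw [h1, mul_zero]
  apply hxne
  rw [hx0, Submodule.span_zero_singleton, Submodule.smul_bot]

end Jiter

section Nakayama
variable {A : Type*} [Ring A] [IsArtinianRing A]
variable {M : Type*} [AddCommGroup M] [Module A M]

/-- Nakayama for arbitrary modules, from nilpotency of the radical. -/
theorem sup_jac_smul_top_eq_top {N : Submodule A M}
    (h : N ⊔ Ideal.jacobson (⊥ : Ideal A) • (⊤ : Submodule A M) = ⊤) : N = ⊤ := by
  obtain ⟨n, hn⟩ := exists_jiter_eq_bot (A := A)
  have key : ∀ k, N ⊔ jiter A k • (⊤ : Submodule A M) = ⊤ := by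
    intro k
    induction k with
    | zero => simp [jiter, Submodule.top_smul]
    | succ k ih =>
      rw [eq_top_iff]
      calc (⊤ : Submodule A M) = N ⊔ jiter A k • (⊤ : Submodule A M) := ih.symm
    _ ≤ N ⊔ jiter A k • (N ⊔ Ideal.jacobson (⊥ : Ideal A) • (⊤ : Submodule A M)) := by
          rw [h]
    _ = N ⊔ (jiter A k • N ⊔ jiter A k • (Ideal.jacobson (⊥ : Ideal A) • (⊤ : Submodule A M))) := by
          rw [Submodule.smul_sup]
    _ ≤ N ⊔ jiter A (k + 1) • (⊤ : Submodule A M) := by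
          apply sup_le le_sup_left
          apply sup_le (le_trans Submodule.smul_le_right le_sup_left)
          rw [← ideal_smul_smul_assoc, ← jiter_one, ← jiter_add]
          exact le_sup_right
  have := key n
  rwa [hn, Submodule.bot_smul, sup_bot_eq] at this

theorem jac_smul_top_ne_top [Nontrivial M] :
    Ideal.jacobson (⊥ : Ideal A) • (⊤ : Submodule A M) ≠ ⊤ := by
  intro h
  have : (⊥ : Submodule A M) = ⊤ := sup_jac_smul_top_eq_top (by rw [bot_sup_eq, h])
  exact bot_ne_top this

end Nakayama
section Semisimple
variable {A : Type*} [Ring A]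

/-- A finite product of semisimple modules is semisimple. -/
lemma isSemisimpleModule_pi {ι : Type*} [Finite ι] (φ : ι → Type*)
    [∀ i, AddCommGroup (φ i)] [∀ i, Module A (φ i)] [∀ i, IsSemisimpleModule A (φ i)] :
    IsSemisimpleModule A (∀ i, φ i) := by
  classical
  refine isSemisimpleModule_of_isSemisimpleModule_submodule (s := Set.univ)
    (p := fun i : ι => LinearMap.range (LinearMap.single A φ i)) ?_ ?_
  · intro i _
    exact IsSemisimpleModule.congr
      (LinearEquiv.ofInjective (LinearMap.single A φ i) (Pi.single_injective i)).symm
  · simpa using LinearMap.iSup_range_single A φ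

/-- The Jacobson radical of an Artinian ring is a finite intersection of maximal ideals. -/
lemma exists_finset_inf_maximal_eq_jacobson [IsArtinianRing A] :
    ∃ s : Finset (Ideal A), (∀ I ∈ s, I.IsMaximal) ∧
      s.inf id = Ideal.jacobson (⊥ : Ideal A) := by
  classical
  set T : Set (Ideal A) := {I | ∃ s : Finset (Ideal A), (∀ M ∈ s, M.IsMaximal) ∧ I = s.inf id}
  have hT : (⊤ : Ideal A) ∈ T := ⟨∅, by simp, by simp⟩
  obtain ⟨m, hmT, hmin⟩ := IsArtinian.set_has_minimal T ⟨⊤, hT⟩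
  obtain ⟨s, hs, rfl⟩ := hmT
  have hle : ∀ M : Ideal A, M.IsMaximal → s.inf id ≤ M := by
    intro M hM
    by_contra hc
    have hmem : s.inf id ⊓ M ∈ T := ⟨insert M s, by
      intro I hI
      rcases Finset.mem_insert.mp hI with rfl | hI
      · exact hM
      · exact hs I hI, by rw [Finset.inf_insert]; exact (inf_comm _ _)⟩
    exact hmin _ hmem (lt_of_le_of_ne inf_le_left (fun h => hc (h ▸ inf_le_right)))
  refine ⟨s, hs, le_antisymm ?_ ?_⟩
  · exact le_sInf fun M hM => hle M hM.2
  · exact Finset.le_inf fun M hM => sInf_le ⟨bot_le, hs M hM⟩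

/-- The quotient of `A` by its Jacobson radical is a semisimple `A`-module. -/
lemma isSemisimpleModule_quotient_jacobson [IsArtinianRing A] :
    IsSemisimpleModule A (A ⧸ (Ideal.jacobson (⊥ : Ideal A) : Submodule A A)) := by
  obtain ⟨s, hmax, hinf⟩ := exists_finset_inf_maximal_eq_jacobson (A := A)
  set J : Submodule A A := Ideal.jacobson (⊥ : Ideal A)
  let φ : A →ₗ[A] ∀ i : {I // I ∈ s}, A ⧸ (i.1 : Submodule A A) :=
    LinearMap.pi fun i => (i.1 : Submodule A A).mkQ
  have hker : LinearMap.ker φ = J := by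
    rw [LinearMap.ker_pi, ← hinf]
    simp only [Submodule.ker_mkQ]
    rw [Finset.inf_eq_iInf]
    simp only [id_eq]
    apply le_antisymm
    · exact le_iInf₂ fun I hI => iInf_le _ (⟨I, hI⟩ : {I // I ∈ s})
    · exact le_iInf fun i => iInf₂_le i.1 i.2
  have hle : J ≤ LinearMap.ker φ := hker.ge
  let ψ := Submodule.liftQ J φ hle
  have hinj : Function.Injective ψ := by
    rw [← LinearMap.ker_eq_bot]
    exact Submodule.ker_liftQ_eq_bot _ _ _ hker.le
  have : ∀ i : {I // I ∈ s}, IsSemisimpleModule A (A ⧸ (i.1 : Submodule A A)) := by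
    intro i
    have : IsSimpleModule A (A ⧸ (i.1 : Submodule A A)) :=
      isSimpleModule_iff_isCoatom.mpr (Ideal.isMaximal_def.mp (hmax i.1 i.2))
    infer_instance
  have : IsSemisimpleModule A (∀ i : {I // I ∈ s}, A ⧸ (i.1 : Submodule A A)) :=
    isSemisimpleModule_pi _
  exact IsSemisimpleModule.congr (M := ↥(LinearMap.range ψ)) (LinearEquiv.ofInjective ψ hinj)

end Semisimple
section Killed
variable {A : Type*} [Ring A] [IsArtinianRing A]
variable {M : Type*} [AddCommGroup M] [Module A M]

/-- A module annihilated by the Jacobson radical over an Artinian ring is semisimple. -/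
lemma isSemisimpleModule_of_jac_smul_eq_bot
    (hJM : Ideal.jacobson (⊥ : Ideal A) • (⊤ : Submodule A M) = ⊥) :
    IsSemisimpleModule A M := by
  set J : Ideal A := Ideal.jacobson (⊥ : Ideal A)
  have : IsSemisimpleModule A (A ⧸ (J : Submodule A A)) :=
    isSemisimpleModule_quotient_jacobson
  refine isSemisimpleModule_of_isSemisimpleModule_submodule (s := (Set.univ : Set M))
    (p := fun x : M => Submodule.span A {x}) ?_ ?_
  · intro x _
    have hle : (J : Submodule A A) ≤ LinearMap.ker (LinearMap.toSpanSingleton A M x) := by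
      intro r hr
      rw [LinearMap.mem_ker, LinearMap.toSpanSingleton_apply]
      have : r • x ∈ J • (⊤ : Submodule A M) := Submodule.smul_mem_smul hr Submodule.mem_top
      rw [hJM] at this
      exact this
    let g := Submodule.liftQ (J : Submodule A A) (LinearMap.toSpanSingleton A M x) hle
    have hrange : LinearMap.range g = Submodule.span A {x} := by
      rw [Submodule.range_liftQ, LinearMap.span_singleton_eq_range]
    rw [← hrange]
    exact IsSemisimpleModule.range g
  · rw [eq_top_iff]
    intro m _
    exact Submodule.mem_iSup_of_mem m (Submodule.mem_iSup_of_mem trivial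
      (Submodule.mem_span_singleton_self m))

end Killed

section EndHom
variable {A : Type*} [Ring A]
variable {M : Type*} [AddCommGroup M] [Module A M]

/-- The ring homomorphism from endomorphisms of `M` to endomorphisms of `M ⧸ JM`. -/
def endQuot : Module.End A M →+* Module.End A (M ⧸ (Ideal.jacobson (⊥ : Ideal A) • (⊤ : Submodule A M))) where
  toFun f := Submodule.mapQ _ _ f (by
    intro x hx
    rw [Submodule.mem_comap]
    have : Submodule.map f (Ideal.jacobson (⊥ : Ideal A) • (⊤ : Submodule A M))
        ≤ Ideal.jacobson (⊥ : Ideal A) • (⊤ : Submodule A M) := by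
      rw [Submodule.map_smul'']
      exact smul_mono_right _ le_top
    exact this (Submodule.mem_map_of_mem hx))
  map_one' := by
    apply Submodule.linearMap_qext
    ext x
    simp [Submodule.mapQ_apply]
  map_mul' f g := by
    apply Submodule.linearMap_qext
    ext x
    simp [Submodule.mapQ_apply, Module.End.mul_apply]
  map_zero' := by
    apply Submodule.linearMap_qext
    ext x
    simp [Submodule.mapQ_apply]
  map_add' f g := by
    apply Submodule.linearMap_qext
    ext x
    simp [Submodule.mapQ_apply]

lemma endQuot_apply (f : Module.End A M) (x : M) :
    endQuot f (Submodule.Quotient.mk x)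
      = Submodule.Quotient.mk (f x) := rfl

lemma endQuot_surjective [Module.Projective A M] : Function.Surjective (endQuot (A := A) (M := M)) := by
  intro g
  obtain ⟨h, hh⟩ := Module.projective_lifting_property
    (Ideal.jacobson (⊥ : Ideal A) • (⊤ : Submodule A M)).mkQ
    (g ∘ₗ (Ideal.jacobson (⊥ : Ideal A) • (⊤ : Submodule A M)).mkQ)
    (Submodule.mkQ_surjective _)
  refine ⟨h, ?_⟩
  apply Submodule.linearMap_qext
  ext x
  have := LinearMap.congr_fun hh x
  simp only [LinearMap.comp_apply, Submodule.mkQ_apply] at this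
  simpa [endQuot_apply] using this

lemma endQuot_ker_isNilpotent [IsArtinianRing A] :
    ∀ f ∈ RingHom.ker (endQuot (A := A) (M := M)), IsNilpotent f := by
  intro f hf
  set J : Ideal A := Ideal.jacobson (⊥ : Ideal A)
  have hrange : LinearMap.range f ≤ J • (⊤ : Submodule A M) := by
    intro y hy
    obtain ⟨x, rfl⟩ := hy
    have h0 : endQuot f = 0 := hf
    have := congr_arg (fun e => e (Submodule.Quotient.mk x)) h0
    simp only [endQuot_apply] at this
    rwa [show (0 : Module.End A (M ⧸ (J • (⊤ : Submodule A M)))) (Submodule.Quotient.mk x) = 0 from rfl,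
      Submodule.Quotient.mk_eq_zero] at this
  obtain ⟨n, hn⟩ := exists_jiter_eq_bot (A := A)
  refine ⟨n, ?_⟩
  have key : ∀ k, LinearMap.range (f ^ k) ≤ jiter A k • (⊤ : Submodule A M) := by
    intro k
    induction k with
    | zero => simp [jiter, Submodule.top_smul]
    | succ k ih =>
      have : f ^ (k + 1) = (f ^ k) * f := by rw [pow_succ]
      rw [this]
      have h1 : LinearMap.range ((f ^ k) * f) ≤ Submodule.map (f ^ k) (LinearMap.range f) := by
        rw [Module.End.mul_eq_comp, LinearMap.range_comp]
      refine le_trans h1 ?_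
      calc Submodule.map (f ^ k) (LinearMap.range f)
          ≤ Submodule.map (f ^ k) (J • (⊤ : Submodule A M)) := Submodule.map_mono hrange
        _ = J • Submodule.map (f ^ k) (⊤ : Submodule A M) := Submodule.map_smul'' _ _ _
        _ ≤ J • (jiter A k • (⊤ : Submodule A M)) := by
            apply smul_mono_right
            rw [Submodule.map_top]
            exact ih
        _ = jiter A (k + 1) • (⊤ : Submodule A M) := (jiter_smul _ _).symm
  have := key n
  rw [hn, Submodule.bot_smul, le_bot_iff, LinearMap.range_eq_bot] at this
  exact this

end EndHom
/-- A module is indecomposable if it is nonzero and has no nontrivial direct summand. -/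
def IsIndecomposable (A M : Type*) [Ring A] [AddCommGroup M] [Module A M] : Prop :=
  Nontrivial M ∧ ∀ N N' : Submodule A M, IsCompl N N' → N = ⊥ ∨ N' = ⊥

/-- Every projective indecomposable module over a finite-dimensional algebra is cyclic. -/
theorem stmt13 {K A P : Type*} [Field K] [Ring A] [Algebra K A] [FiniteDimensional K A]
    [AddCommGroup P] [Module A P] [Module.Projective A P]
    (hP : IsIndecomposable A P) :
    ∃ x : P, Submodule.span A {x} = ⊤ := by
  obtain ⟨hnt, hind⟩ := hP
  have hAart : IsArtinianRing A := isArtinian_of_tower K inferInstance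
  set J : Ideal A := Ideal.jacobson (⊥ : Ideal A) with hJ
  set p : Submodule A P := J • (⊤ : Submodule A P) with hp
  -- the quotient is nontrivial
  have hpne : p ≠ ⊤ := jac_smul_top_ne_top
  have hQnt : Nontrivial (P ⧸ p) :=
    Submodule.Quotient.nontrivial_iff.mpr hpne
  -- the quotient is killed by J, hence semisimple
  have hkill : J • (⊤ : Submodule A (P ⧸ p)) = ⊥ := by
    rw [eq_bot_iff, Submodule.smul_le]
    intro r hr m _
    obtain ⟨x, rfl⟩ := Submodule.mkQ_surjective p m
    rw [Submodule.mem_bot, Submodule.mkQ_apply, ← Submodule.Quotient.mk_smul,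
      Submodule.Quotient.mk_eq_zero]
    exact Submodule.smul_mem_smul hr Submodule.mem_top
  have hQss : IsSemisimpleModule A (P ⧸ p) := isSemisimpleModule_of_jac_smul_eq_bot hkill
  -- every submodule of the quotient is ⊥ or ⊤
  have hsimple : ∀ N : Submodule A (P ⧸ p), N = ⊥ ∨ N = ⊤ := by
    intro N
    obtain ⟨N', hN'⟩ := exists_isCompl N
    -- idempotent projection onto N
    set e : Module.End A (P ⧸ p) := N.subtype ∘ₗ N.projectionOnto N' hN' with he
    have heidem : IsIdempotentElem e := by
      show e * e = e
      apply LinearMap.ext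
      intro x
      rw [Module.End.mul_apply]
      show (N.subtype ∘ₗ N.projectionOnto N' hN') (↑(N.projectionOnto N' hN' x)) = _
      rw [LinearMap.comp_apply, Submodule.linearProjOfIsCompl_apply_left]
      rfl
    have hrangee : LinearMap.range e = N := by
      rw [he, LinearMap.range_comp, Submodule.range_projectionOnto, Submodule.map_subtype_top]
    -- lift the idempotent to an idempotent endomorphism of P
    obtain ⟨e', he'idem, he'⟩ := exists_isIdempotentElem_eq_of_ker_isNilpotent
      (f := endQuot (A := A) (M := P)) endQuot_ker_isNilpotent e
      (endQuot_surjective e) heidem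
    have hcompl : IsCompl (LinearMap.ker e') (LinearMap.range e') := by
      constructor
      · rw [Submodule.disjoint_def]
        intro x hx hx'
        obtain ⟨y, rfl⟩ := hx'
        rw [LinearMap.mem_ker, ← Module.End.mul_apply, he'idem] at hx
        exact hx
      · rw [codisjoint_iff_le_sup]
        intro x _
        have h1 : x - e' x ∈ LinearMap.ker e' := by
          rw [LinearMap.mem_ker, map_sub, ← Module.End.mul_apply, he'idem, sub_self]
        have h2 : e' x ∈ LinearMap.range e' := ⟨x, rfl⟩
        have hx : x = (x - e' x) + e' x := by abel
        rw [hx]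
        exact Submodule.add_mem_sup h1 h2
    rcases hind _ _ hcompl with hker | hrange
    · -- e' injective, hence e' = 1 and N = ⊤
      right
      have he'1 : e' = 1 := by
        apply LinearMap.ext
        intro x
        have : e' (e' x - x) = 0 := by
          rw [map_sub, ← Module.End.mul_apply, he'idem, sub_self]
        have hmem : e' x - x ∈ LinearMap.ker e' := this
        rw [hker, Submodule.mem_bot, sub_eq_zero] at hmem
        exact hmem
      have : e = 1 := by rw [← he', he'1, map_one]
      rw [← hrangee, this]
      rw [Module.End.one_eq_id]
      exact LinearMap.range_id
    · -- e' = 0 and N = ⊥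
      left
      have he'0 : e' = 0 := by rwa [LinearMap.range_eq_bot] at hrange
      have : e = 0 := by rw [← he', he'0, map_zero]
      rw [← hrangee, this, LinearMap.range_zero]
  -- pick a nonzero element of the quotient; its span is everything
  obtain ⟨q, hq⟩ := exists_ne (0 : P ⧸ p)
  have hspanq : Submodule.span A {q} = ⊤ := by
    rcases hsimple (Submodule.span A {q}) with h | h
    · exact absurd (Submodule.span_singleton_eq_bot.mp h) hq
    · exact h
  obtain ⟨x, rfl⟩ := Submodule.mkQ_surjective p q
  refine ⟨x, ?_⟩
  apply sup_jac_smul_top_eq_top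
  rw [← hp, sup_comm]
  rw [← Submodule.map_mkQ_eq_top, Submodule.map_span, Set.image_singleton]
  exact hspanq
end
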